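/- Assume that any two non-commuting elements r, s ∈ R satisfy rsr = srs. Then: (i) for all s, u ∈ R with s ≠ u and su = us, the endomorphisms τ_s and τ_u commute; (ii) for all s, u ∈ R with su ≠ us, the endomorphism τ_s commutes with τ_s + τ_u + τ_{sus}. (These are the defining relations of the holonomy Lie algebra of the reflection arrangement, so t_s ↦ τ_s defines a representation of that Lie algebra.) -/
import Mathlib

section GroupLemmas
variable {G : Type} [Group G]

lemma tauHR_sq_inv {a : G} (h : a * a = 1) : a⁻¹ = a := inv_eq_of_mul_eq_one_right h

lemma tauHR_conj_cancel {g x : G} (hg : g * g = 1) : g * (g * x * g) * g = x := by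
  calc g * (g * x * g) * g = (g*g) * x * (g*g) := by group
  _ = x := by rw [hg]; group

lemma tauHR_conj_inj {g x y : G} (hg : g * g = 1) (h : g * x * g = g * y * g) : x = y := by
  calc x = g * (g * x * g) * g := (tauHR_conj_cancel hg).symm
  _ = g * (g * y * g) * g := by rw [h]
  _ = y := tauHR_conj_cancel hg

lemma tauHR_conjMul (g a b : G) (hg : g * g = 1) : (g*a*g) * (g*b*g) = g*(a*b)*g := by
  calc (g*a*g) * (g*b*g) = g*a*(g*g)*b*g := by group
  _ = g*(a*b)*g := by rw [hg]; group

lemma tauHR_comm_conj {g a b : G} (hg : g * g = 1) (h : a * b = b * a) :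
    (g*a*g) * (g*b*g) = (g*b*g) * (g*a*g) := by
  rw [tauHR_conjMul _ _ _ hg, tauHR_conjMul _ _ _ hg, h]

lemma tauHR_comm_of_conj_comm {g a b : G} (hg : g * g = 1)
    (h : (g*a*g) * (g*b*g) = (g*b*g) * (g*a*g)) : a * b = b * a := by
  apply tauHR_conj_inj hg
  rw [← tauHR_conjMul _ _ _ hg, ← tauHR_conjMul _ _ _ hg, h]

lemma tauHR_comm_of_conj_eq {g x : G} (hg : g * g = 1) (h : g * x * g = x) :
    g * x = x * g := by
  calc g * x = (g * x * g) * g := by rw [mul_assoc, hg, mul_one]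
  _ = x * g := by rw [h]

/-- If `s` braids with `t`, `t` braids with `u`, and `s` commutes with `u*t*u`,
then `t` commutes with `s*u*s`. -/
lemma tauHR_braidA {s t u : G} (hs : s*s = 1) (ht : t*t = 1)
    (hst : s*t*s = t*s*t) (htu : t*u*t = u*t*u)
    (hw : s*(u*t*u) = (u*t*u)*s) : t*(s*u*s) = (s*u*s)*t := by
  have key : s*t*s*u*s*t*s = u := by
    calc s*t*s*u*s*t*s = (s*t*s)*u*(s*t*s) := by group
    _ = (t*s*t)*u*(t*s*t) := by rw [hst]
    _ = t*(s*(t*u*t)*s)*t := by group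
    _ = t*(s*(u*t*u)*s)*t := by rw [htu]
    _ = t*((s*(u*t*u))*s)*t := by group
    _ = t*(((u*t*u)*s)*s)*t := by rw [hw]
    _ = t*(u*t*u*(s*s))*t := by group
    _ = t*(u*t*u)*t := by rw [hs]; group
    _ = t*(t*u*t)*t := by rw [htu]
    _ = (t*t)*u*(t*t) := by group
    _ = u := by rw [ht]; group
  have h3 : t*s*u*s*t = s*u*s := by
    calc t*s*u*s*t = 1*(t*s*u*s*t)*1 := by group
    _ = (s*s)*(t*s*u*s*t)*(s*s) := by rw [hs]
    _ = s*(s*t*s*u*s*t*s)*s := by group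
    _ = s*u*s := by rw [key]
  calc t*(s*u*s) = t*s*u*s*1 := by group
  _ = t*s*u*s*(t*t) := by rw [ht]
  _ = (t*s*u*s*t)*t := by group
  _ = (s*u*s)*t := by rw [h3]

/-- If `s` braids with `u`, `t` braids with `u`, and `s` commutes with
`(s*u*s)*t*(s*u*s)`, then `t = u`. -/
lemma tauHR_braidB {s t u : G} (hs : s*s = 1) (ht : t*t = 1) (hu : u*u = 1)
    (hsu : s*u*s = u*s*u) (htu : t*u*t = u*t*u)
    (hz : s*((s*u*s)*t*(s*u*s)) = ((s*u*s)*t*(s*u*s))*s) : t = u := by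
  have h1 : u*s*t*s*u = s*u*s*t*s*u*s := by
    calc u*s*t*s*u = (s*s)*u*s*t*s*u*(s*s) := by rw [hs]; group
    _ = (s*((s*u*s)*t*(s*u*s)))*s := by group
    _ = (((s*u*s)*t*(s*u*s))*s)*s := by rw [hz]
    _ = ((s*u*s)*t*(s*u*s))*(s*s) := by group
    _ = s*u*s*t*s*u*s := by rw [hs]; group
  have h2 : s*t*s = s*(u*t*u)*s := by
    calc s*t*s = (u*u)*s*t*s*(u*u) := by rw [hu]; group
    _ = u*(u*s*t*s*u)*u := by group
    _ = u*(s*u*s*t*s*u*s)*u := by rw [h1]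
    _ = (u*(s*u*s))*t*((s*u*s)*u) := by group
    _ = (u*(u*s*u))*t*((u*s*u)*u) := by rw [hsu]
    _ = ((u*u)*s*u)*t*(u*s*(u*u)) := by group
    _ = (s*u)*t*(u*s) := by rw [hu]; group
    _ = s*(u*t*u)*s := by group
  have h4 : t = u*t*u := tauHR_conj_inj hs h2
  have h5 : t*u*t = t := by rw [htu, ← h4]
  have h6 : u*t = 1 := by
    calc u*t = (t*t)*(u*t) := by rw [ht]; group
    _ = t*(t*u*t) := by group
    _ = t*t := by rw [h5]
    _ = 1 := ht
  calc t = (u*u)*t := by rw [hu]; group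
  _ = u*(u*t) := by group
  _ = u := by rw [h6]; group

end GroupLemmas

lemma tauHR_ext_single {k : Type} [Field k] {α : Type} {φ ψ : (α →₀ k) →ₗ[k] (α →₀ k)}
    (h : ∀ a, φ (Finsupp.single a 1) = ψ (Finsupp.single a 1)) : φ = ψ := by
  apply Finsupp.lhom_ext
  intro a b
  have hb : (Finsupp.single a b : α →₀ k) = b • Finsupp.single a 1 := by
    rw [Finsupp.smul_single, smul_eq_mul, mul_one]
  rw [hb, map_smul, map_smul, h]

set_option maxHeartbeats 4000000 in
theorem tau_holonomy_relations
    (k : Type) [Field k] [CharZero k] (m : k)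
    (W : Type) [Group W] (R : Set W) (hfin : R.Finite)
    (hinv : ∀ s ∈ R, s * s = 1 ∧ s ≠ 1)
    (hconj : ∀ w : W, ∀ s ∈ R, w * s * w⁻¹ ∈ R)
    (τ : R → ((R →₀ k) →ₗ[k] (R →₀ k)))
    (hτ₁ : ∀ s u : R, (s : W) * u ≠ u * s → ∀ c : R, (c : W) = s * u * s →
      τ s (Finsupp.single u 1) = Finsupp.single c 1 - Finsupp.single s 1)
    (hτ₂ : ∀ s u : R, (s : W) * u = u * s → u ≠ s →
      τ s (Finsupp.single u 1) = Finsupp.single u 1)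
    (hτ₃ : ∀ s : R, τ s (Finsupp.single s 1) = m • Finsupp.single s 1)
    -- any two non-commuting elements of `R` braid
    (hbraid : ∀ r s : W, r ∈ R → s ∈ R → r * s ≠ s * r → r * s * r = s * r * s) :
    (∀ s u : R, s ≠ u → (s : W) * u = u * s → τ s ∘ₗ τ u = τ u ∘ₗ τ s) ∧
    (∀ s u : R, (s : W) * u ≠ u * s → ∀ c : R, (c : W) = s * u * s →
      τ s ∘ₗ (τ s + τ u + τ c) = (τ s + τ u + τ c) ∘ₗ τ s) := by
  have hsq : ∀ a : R, (a : W) * a = 1 := fun a => (hinv a a.2).1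
  have hRW : ∀ (a : R), ∀ x ∈ R, (a : W) * x * a ∈ R := by
    intro a x hx
    have h2 := hconj a x hx
    rwa [tauHR_sq_inv (hsq a)] at h2
  constructor
  · -- Part (i)
    intro s u hne hcomm
    have hun : u ≠ s := hne.symm
    apply tauHR_ext_single
    intro t
    simp only [LinearMap.comp_apply]
    by_cases hts : t = s
    · subst hts
      rw [hτ₂ u t hcomm.symm hne, hτ₃ t, map_smul, hτ₂ u t hcomm.symm hne]
    by_cases htu : t = u
    · subst htu
      rw [hτ₃ t, map_smul, hτ₂ s t hcomm hun, hτ₃ t]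
    by_cases hst : (s : W) * t = t * s <;> by_cases hut : (u : W) * t = t * u
    · -- t commutes with both
      simp only [hτ₂ u t hut htu, hτ₂ s t hst hts]
    · -- t commutes with s, not with u
      set x : R := ⟨(u : W) * t * u, hRW u t t.2⟩ with hxdef
      have hxv : (x : W) = (u : W) * t * u := rfl
      have hsx : (s : W) * x = x * s := by
        rw [hxv]
        calc (s:W)*((u:W)*t*u) = ((s:W)*u)*t*u := by group
        _ = ((u:W)*s)*t*u := by rw [hcomm]
        _ = (u:W)*((s:W)*t)*u := by group
        _ = (u:W)*((t:W)*s)*u := by rw [hst]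
        _ = ((u:W)*t)*((s:W)*u) := by group
        _ = ((u:W)*t)*((u:W)*s) := by rw [hcomm]
        _ = ((u:W)*t*u)*s := by group
      have hxs : x ≠ s := by
        intro h
        apply hts
        apply Subtype.ext
        have hv : (u : W) * t * u = s := congrArg Subtype.val h
        have h2 : (t : W) = (u : W) * s * u := by
          calc (t : W) = (u:W) * ((u:W)*t*u) * u := (tauHR_conj_cancel (hsq u)).symm
          _ = (u:W) * s * u := by rw [hv]
        rw [h2]
        calc (u:W) * s * u = (u:W)*((s:W)*u) := by group
        _ = (u:W)*((u:W)*s) := by rw [hcomm]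
        _ = ((u:W)*u)*s := by group
        _ = s := by rw [hsq u]; group
      simp only [hτ₁ u t hut x rfl, hτ₂ s t hst hts, map_sub, hτ₂ s x hsx hxs,
        hτ₂ s u hcomm hun]
    · -- t commutes with u, not with s
      set x : R := ⟨(s : W) * t * s, hRW s t t.2⟩ with hxdef
      have hxv : (x : W) = (s : W) * t * s := rfl
      have hux : (u : W) * x = x * u := by
        rw [hxv]
        calc (u:W)*((s:W)*t*s) = ((u:W)*s)*t*s := by group
        _ = ((s:W)*u)*t*s := by rw [← hcomm]
        _ = (s:W)*((u:W)*t)*s := by group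
        _ = (s:W)*((t:W)*u)*s := by rw [hut]
        _ = ((s:W)*t)*((u:W)*s) := by group
        _ = ((s:W)*t)*((s:W)*u) := by rw [← hcomm]
        _ = ((s:W)*t*s)*u := by group
      have hxu : x ≠ u := by
        intro h
        apply htu
        apply Subtype.ext
        have hv : (s : W) * t * s = u := congrArg Subtype.val h
        have h2 : (t : W) = (s : W) * u * s := by
          calc (t : W) = (s:W) * ((s:W)*t*s) * s := (tauHR_conj_cancel (hsq s)).symm
          _ = (s:W) * u * s := by rw [hv]
        rw [h2]
        calc (s:W) * u * s = ((s:W)*u)*s := by group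
        _ = ((u:W)*s)*s := by rw [hcomm]
        _ = (u:W)*((s:W)*s) := by group
        _ = u := by rw [hsq s]; group
      simp only [hτ₂ u t hut htu, hτ₁ s t hst x rfl, map_sub,
        hτ₂ u x hux hxu, hτ₂ u s hcomm.symm hne]
    · -- t commutes with neither
      set x : R := ⟨(u : W) * t * u, hRW u t t.2⟩ with hxdef
      set p : R := ⟨(s : W) * t * s, hRW s t t.2⟩ with hpdef
      set q : R := ⟨(s : W) * ((u : W) * t * u) * s, hRW s _ (hRW u t t.2)⟩ with hqdef
      have hqv : (q : W) = (u : W) * ((s : W) * t * s) * u := by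
        show (s : W) * ((u : W) * t * u) * s = (u : W) * ((s : W) * t * s) * u
        calc (s:W)*((u:W)*t*u)*s = ((s:W)*u)*t*((u:W)*s) := by group
        _ = ((u:W)*s)*t*((u:W)*s) := by rw [hcomm]
        _ = ((u:W)*s)*t*((s:W)*u) := by rw [← hcomm]
        _ = (u:W)*((s:W)*t*s)*u := by group
      have husu : (u : W) * s * u = s := by
        calc (u:W)*s*u = (u:W)*((s:W)*u) := by group
        _ = (u:W)*((u:W)*s) := by rw [hcomm]
        _ = ((u:W)*u)*s := by group
        _ = s := by rw [hsq u]; group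
      have hsus : (s : W) * u * s = u := by
        calc (s:W)*u*s = ((s:W)*u)*s := by group
        _ = ((u:W)*s)*s := by rw [hcomm]
        _ = (u:W)*((s:W)*s) := by group
        _ = u := by rw [hsq s]; group
      have hsx : ¬ (s : W) * x = x * s := by
        intro h
        apply hst
        apply tauHR_comm_of_conj_comm (hsq u)
        rw [husu]
        exact h
      have hup : ¬ (u : W) * p = p * u := by
        intro h
        apply hut
        apply tauHR_comm_of_conj_comm (hsq s)
        rw [hsus]
        exact h
      simp only [hτ₁ u t hut x rfl, hτ₁ s t hst p rfl, map_sub,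
        hτ₁ s x hsx q rfl, hτ₂ s u hcomm hun, hτ₁ u p hup q hqv,
        hτ₂ u s hcomm.symm hne]
      abel
  · -- Part (ii)
    intro s u hsu c hc
    have hus : (u : W) * s ≠ s * u := fun h => hsu h.symm
    have hb_su : (s : W) * u * s = (u : W) * s * u := hbraid s u s.2 u.2 hsu
    have scs_eq : (s : W) * c * s = u := by
      rw [hc]; exact tauHR_conj_cancel (hsq s)
    have ucu_eq : (u : W) * c * u = s := by
      rw [hc, hb_su]; exact tauHR_conj_cancel (hsq u)
    have csc_eq : (c : W) * s * c = u := by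
      rw [hc]
      calc (s:W)*u*s*s*((s:W)*u*s) = (s:W)*u*((s:W)*s)*((s:W)*u*s) := by group
      _ = (s:W)*u*((s:W)*u*s) := by rw [hsq s]; group
      _ = ((s:W)*u*s)*u*s := by group
      _ = ((u:W)*s*u)*u*s := by rw [hb_su]
      _ = (u:W)*s*((u:W)*u)*s := by group
      _ = (u:W)*((s:W)*s) := by rw [hsq u]; group
      _ = u := by rw [hsq s]; group
    have cuc_eq : (c : W) * u * c = s := by
      rw [hc]
      calc (s:W)*u*s*u*((s:W)*u*s) = (s:W)*u*((s:W)*u*s)*u*s := by group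
      _ = (s:W)*u*((u:W)*s*u)*u*s := by rw [hb_su]
      _ = (s:W)*((u:W)*u)*s*((u:W)*u)*s := by group
      _ = (s:W)*s*s := by rw [hsq u]; group
      _ = s := by rw [hsq s]; group
    have hcu_ne : c ≠ u := by
      intro h
      apply hsu
      have hv : (s : W) * u * s = u := by rw [← hc]; exact congrArg Subtype.val h
      calc (s:W)*u = ((s:W)*u)*((s:W)*s) := by rw [hsq s]; group
      _ = ((s:W)*u*s)*s := by group
      _ = (u:W)*s := by rw [hv]
    have hcs_ne : c ≠ s := by
      intro h
      apply hsu
      have hv : (s : W) * u * s = s := by rw [← hc]; exact congrArg Subtype.val h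
      have h2 : (u : W) = s := by
        calc (u:W) = (s:W)*((s:W)*u*s)*s := (tauHR_conj_cancel (hsq s)).symm
        _ = (s:W)*s*s := by rw [hv]
        _ = s := by rw [hsq s]; group
      rw [h2]
    have hsc : ¬ (s : W) * c = c * s := by
      intro h
      apply hcu_ne
      apply Subtype.ext
      calc (c:W) = (c:W)*((s:W)*s) := by rw [hsq s]; group
      _ = ((c:W)*s)*s := by group
      _ = ((s:W)*c)*s := by rw [h]
      _ = u := scs_eq
    have huc : ¬ (u : W) * c = c * u := by
      intro h
      apply hcs_ne
      apply Subtype.ext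
      calc (c:W) = (c:W)*((u:W)*u) := by rw [hsq u]; group
      _ = ((c:W)*u)*u := by group
      _ = ((u:W)*c)*u := by rw [← h]
      _ = s := ucu_eq
    have Tsu := hτ₁ s u hsu c hc
    have Tsc := hτ₁ s c hsc u scs_eq.symm
    have Tus := hτ₁ u s hus c (hc.trans hb_su)
    have Tuc := hτ₁ u c huc s ucu_eq.symm
    have Tcs := hτ₁ c s (fun h => hsc h.symm) u csc_eq.symm
    have Tcu := hτ₁ c u (fun h => huc h.symm) s cuc_eq.symm
    apply tauHR_ext_single
    intro t
    simp only [LinearMap.comp_apply, LinearMap.add_apply, map_add]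
    by_cases hts : t = s
    · subst hts
      simp only [hτ₃ t, hτ₃ u, hτ₃ c, Tsu, Tsc, Tus, Tuc, Tcs, Tcu, map_sub, map_smul]
      module
    by_cases htu : t = u
    · subst htu
      simp only [hτ₃ s, hτ₃ t, hτ₃ c, Tsu, Tsc, Tus, Tuc, Tcs, Tcu, map_sub, map_smul]
      module
    by_cases htc : t = c
    · subst htc
      simp only [hτ₃ s, hτ₃ u, hτ₃ t, Tsu, Tsc, Tus, Tuc, Tcs, Tcu, map_sub, map_smul]
      module
    by_cases hst : (s : W) * t = t * s
    · by_cases hut : (u : W) * t = t * u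
      · -- case (a)
        have hct_comm : (c : W) * t = t * c := by
          calc (c:W)*t = (s:W)*u*((s:W)*t) := by rw [hc]; group
          _ = (s:W)*u*((t:W)*s) := by rw [hst]
          _ = (s:W)*((u:W)*t)*s := by group
          _ = (s:W)*((t:W)*u)*s := by rw [hut]
          _ = ((s:W)*t)*((u:W)*s) := by group
          _ = ((t:W)*s)*((u:W)*s) := by rw [hst]
          _ = (t:W)*((s:W)*u*s) := by group
          _ = (t:W)*c := by rw [hc]
        simp only [hτ₂ s t hst hts, hτ₂ u t hut htu, hτ₂ c t hct_comm htc]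
      · -- case (b) : t commutes with s only
        have hsts_t : (s : W) * t * s = t := by rw [hst, mul_assoc, hsq s, mul_one]
        set x : R := ⟨(u : W) * t * u, hRW u t t.2⟩ with hxdef
        have hxv : (x : W) = (u : W) * t * u := rfl
        set y : R := ⟨(s : W) * x * s, hRW s x x.2⟩ with hydef
        have hyv : (y : W) = (s : W) * x * s := rfl
        have htc_non : ¬ (c : W) * t = t * c := by
          intro h
          apply hut
          calc (u:W)*t = ((s:W)*c*s)*((s:W)*t*s) := by rw [scs_eq, hsts_t]
          _ = (s:W)*((c:W)*t)*s := tauHR_conjMul _ _ _ (hsq s)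
          _ = (s:W)*((t:W)*c)*s := by rw [h]
          _ = ((s:W)*t*s)*((s:W)*c*s) := (tauHR_conjMul _ _ _ (hsq s)).symm
          _ = (t:W)*u := by rw [scs_eq, hsts_t]
        have braid_tu : (t : W) * u * t = u * t * u := hbraid t u t.2 u.2 (fun h => hut h.symm)
        have htwt : (t : W) * ((u : W) * t * u) * t = u := by
          rw [← braid_tu]; exact tauHR_conj_cancel (hsq t)
        have hsx_non : ¬ (s : W) * x = x * s := by
          intro h
          apply hsu
          have h1 : (s:W)*((u:W)*t*u) = ((u:W)*t*u)*s := by rw [← hxv]; exact h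
          calc (s:W)*u = (s:W)*((t:W)*((u:W)*t*u)*t) := by rw [htwt]
          _ = ((s:W)*t)*(((u:W)*t*u)*t) := by group
          _ = ((t:W)*s)*(((u:W)*t*u)*t) := by rw [hst]
          _ = (t:W)*((s:W)*((u:W)*t*u))*t := by group
          _ = (t:W)*(((u:W)*t*u)*s)*t := by rw [h1]
          _ = ((t:W)*((u:W)*t*u))*((s:W)*t) := by group
          _ = ((t:W)*((u:W)*t*u))*((t:W)*s) := by rw [hst]
          _ = ((t:W)*((u:W)*t*u)*t)*s := by group
          _ = (u:W)*s := by rw [htwt]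
        have hsy_non : ¬ (s : W) * y = y * s := by
          intro h
          apply hsx_non
          have h1 : (s:W)*((s:W)*x*s) = ((s:W)*x*s)*s := by rw [← hyv]; exact h
          have h2 : (x:W)*s = s*x := by
            calc (x:W)*s = ((s:W)*s)*x*s := by rw [hsq s]; group
            _ = (s:W)*((s:W)*x*s) := by group
            _ = ((s:W)*x*s)*s := h1
            _ = (s:W)*x*((s:W)*s) := by group
            _ = (s:W)*x := by rw [hsq s]; group
          exact h2.symm
        have hyv2 : (y : W) = (c : W) * t * c := by
          rw [hyv, hxv, hc]
          calc (s:W)*((u:W)*t*u)*s = (s:W)*u*((s:W)*t*s)*u*s := by rw [hsts_t]; group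
          _ = ((s:W)*u*s)*t*((s:W)*u*s) := by group
        have hxv3 : (x : W) = (s : W) * y * s := by
          rw [hyv]; exact (tauHR_conj_cancel (hsq s)).symm
        have Tut := hτ₁ u t hut x hxv
        have Tct := hτ₁ c t htc_non y hyv2
        have Tsx := hτ₁ s x hsx_non y hyv
        have Tsy := hτ₁ s y hsy_non x hxv3
        simp only [hτ₂ s t hst hts, Tut, Tct, Tsx, Tsy, Tsu, Tsc, Tus, Tuc, Tcs, Tcu,
          hτ₃ s, map_sub, map_smul]
        module
    · -- t does not commute with s
      set p : R := ⟨(s : W) * t * s, hRW s t t.2⟩ with hpdef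
      have hpv : (p : W) = (s : W) * t * s := rfl
      have hsp_non : ¬ (s : W) * p = p * s := by
        intro h
        apply hst
        have h1 : (s:W)*((s:W)*t*s) = ((s:W)*t*s)*s := by rw [← hpv]; exact h
        have h2 : (t:W) = (s:W)*t*s := by
          calc (t:W) = (s:W)*((s:W)*t*s)*s := (tauHR_conj_cancel (hsq s)).symm
          _ = ((s:W)*((s:W)*t*s))*s := by group
          _ = (((s:W)*t*s)*s)*s := by rw [h1]
          _ = (s:W)*t*s*((s:W)*s) := by group
          _ = (s:W)*t*s := by rw [hsq s]; group
        calc (s:W)*t = (s:W)*((s:W)*t*s) := by rw [← h2]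
        _ = ((s:W)*s)*t*s := by group
        _ = (t:W)*s := by rw [hsq s]; group
      have htv : (t : W) = (s : W) * p * s := by
        rw [hpv]; exact (tauHR_conj_cancel (hsq s)).symm
      have Tst := hτ₁ s t hst p hpv
      have Tsp := hτ₁ s p hsp_non t htv
      by_cases hut : (u : W) * t = t * u
      · -- case (c) : t commutes with u only
        have huts_t : (u : W) * t * u = t := by rw [hut, mul_assoc, hsq u, mul_one]
        set z : R := ⟨(u : W) * p * u, hRW u p p.2⟩ with hzdef
        have hzv : (z : W) = (u : W) * p * u := rfl
        have htc_non : ¬ (c : W) * t = t * c := by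
          intro h
          apply hst
          calc (s:W)*t = ((u:W)*c*u)*((u:W)*t*u) := by rw [ucu_eq, huts_t]
          _ = (u:W)*((c:W)*t)*u := tauHR_conjMul _ _ _ (hsq u)
          _ = (u:W)*((t:W)*c)*u := by rw [h]
          _ = ((u:W)*t*u)*((u:W)*c*u) := (tauHR_conjMul _ _ _ (hsq u)).symm
          _ = (t:W)*s := by rw [ucu_eq, huts_t]
        have hzv2 : (z : W) = (c : W) * t * c := by
          rw [hzv, hpv, hc]
          calc (u:W)*((s:W)*t*s)*u = (u:W)*s*((u:W)*t*u)*s*u := by rw [huts_t]; group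
          _ = ((u:W)*s*u)*t*((u:W)*s*u) := by group
          _ = ((s:W)*u*s)*t*((s:W)*u*s) := by rw [hb_su]
        have hsz_comm : (s : W) * z = z * s := by
          apply tauHR_comm_of_conj_eq (hsq s)
          rw [hzv, hpv]
          calc (s:W)*((u:W)*((s:W)*t*s)*u)*s = ((s:W)*u*s)*t*((s:W)*u*s) := by group
          _ = ((u:W)*s*u)*t*((u:W)*s*u) := by rw [hb_su]
          _ = (u:W)*((s:W)*((u:W)*t*u)*s)*u := by group
          _ = (u:W)*((s:W)*t*s)*u := by rw [huts_t]
        have hz_ne : z ≠ s := by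
          intro h
          have hv := congrArg Subtype.val h
          rw [hzv, hpv] at hv
          have h2 : (s:W)*t*s = (u:W)*s*u :=
            tauHR_conj_inj (hsq u) (hv.trans (tauHR_conj_cancel (hsq u)).symm)
          have h3 : (s:W)*t*s = (s:W)*u*s := h2.trans hb_su.symm
          exact htu (Subtype.ext (tauHR_conj_inj (hsq s) h3))
        have hup_non : ¬ (u : W) * p = p * u := by
          intro h
          apply htc_non
          apply tauHR_comm_of_conj_comm (hsq s)
          rw [scs_eq, ← hpv]
          exact h
        have hcp_comm : (c : W) * p = p * c := by
          calc (c:W)*p = ((s:W)*u*s)*((s:W)*t*s) := by rw [hc, hpv]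
          _ = ((s:W)*t*s)*((s:W)*u*s) := tauHR_comm_conj (hsq s) hut
          _ = (p:W)*c := by rw [hc, hpv]
        have hp_ne_c : p ≠ c := by
          intro h
          have hv := congrArg Subtype.val h
          rw [hpv, hc] at hv
          exact htu (Subtype.ext (tauHR_conj_inj (hsq s) hv))
        have Tut_c := hτ₂ u t hut htu
        have Tct := hτ₁ c t htc_non z hzv2
        have Tsz := hτ₂ s z hsz_comm hz_ne
        have Tup := hτ₁ u p hup_non z hzv
        have Tcp := hτ₂ c p hcp_comm hp_ne_c
        simp only [Tst, Tsp, Tut_c, Tct, Tsz, Tup, Tcp, Tsu, Tsc, Tus, Tuc, Tcs, Tcu,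
          hτ₃ s, map_sub, map_smul]
        module
      · -- t commutes with neither s nor u
        set w : R := ⟨(u : W) * t * u, hRW u t t.2⟩ with hwdef
        have hwv : (w : W) = (u : W) * t * u := rfl
        have braid_tu : (t : W) * u * t = u * t * u := hbraid t u t.2 u.2 (fun h => hut h.symm)
        by_cases hct : (c : W) * t = t * c
        · -- case (d)
          have hsw_comm : (s : W) * w = w * s := by
            have h1 := tauHR_comm_conj (hsq u) hct
            rw [ucu_eq] at h1
            rw [hwv]
            exact h1
          have hsws : (s : W) * ((u : W) * t * u) * s = (u : W) * t * u := by
            have h1 := hsw_comm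
            rw [hwv] at h1
            calc (s:W)*((u:W)*t*u)*s = (((u:W)*t*u)*s)*s := by rw [h1]
            _ = ((u:W)*t*u)*((s:W)*s) := by group
            _ = (u:W)*t*u := by rw [hsq s]; group
          have hw_ne_s : w ≠ s := by
            intro h
            apply htc
            apply Subtype.ext
            have hv := congrArg Subtype.val h
            rw [hwv] at hv
            have h2 : (t : W) = (u : W) * s * u :=
              tauHR_conj_inj (hsq u) (hv.trans (tauHR_conj_cancel (hsq u)).symm)
            rw [hc]
            exact h2.trans hb_su.symm
          have hup_comm : (u : W) * p = p * u := by
            have h1 := tauHR_comm_conj (hsq s) hct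
            rw [scs_eq] at h1
            rw [hpv]
            exact h1
          have hp_ne_u : p ≠ u := by
            intro h
            apply htc
            apply Subtype.ext
            have hv := congrArg Subtype.val h
            rw [hpv] at hv
            have h2 : (t : W) = (s : W) * u * s :=
              tauHR_conj_inj (hsq s) (hv.trans (tauHR_conj_cancel (hsq s)).symm)
            rw [hc]
            exact h2
          have hcp_non : ¬ (c : W) * p = p * c := by
            intro h
            apply hut
            apply tauHR_comm_of_conj_comm (hsq s)
            rw [← hc, ← hpv]
            exact h
          have hwv2 : (w : W) = (c : W) * p * c := by
            rw [hwv, hc, hpv]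
            calc (u:W)*t*u = (s:W)*((u:W)*t*u)*s := hsws.symm
            _ = (s:W)*u*((s:W)*s)*t*((s:W)*s)*u*s := by rw [hsq s]; group
            _ = ((s:W)*u*s)*((s:W)*t*s)*((s:W)*u*s) := by group
          have Tut := hτ₁ u t hut w hwv
          have Tct_c := hτ₂ c t hct htc
          have Tsw := hτ₂ s w hsw_comm hw_ne_s
          have Tup_c := hτ₂ u p hup_comm hp_ne_u
          have Tcp := hτ₁ c p hcp_non w hwv2
          simp only [Tst, Tsp, Tut, Tct_c, Tsw, Tup_c, Tcp, Tsu, Tsc, Tus, Tuc, Tcs, Tcu,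
            hτ₃ s, map_sub, map_smul]
          module
        · -- case (e)
          set z : R := ⟨(c : W) * t * c, hRW c t t.2⟩ with hzdef
          have hzv : (z : W) = (c : W) * t * c := rfl
          set w' : R := ⟨(s : W) * w * s, hRW s w w.2⟩ with hw'def
          have hw'v : (w' : W) = (s : W) * w * s := rfl
          set z' : R := ⟨(u : W) * p * u, hRW u p p.2⟩ with hz'def
          have hz'v : (z' : W) = (u : W) * p * u := rfl
          have braid_st : (s : W) * t * s = t * s * t := hbraid s t s.2 t.2 hst
          have hsw_non : ¬ (s : W) * w = w * s := by
            intro h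
            apply hct
            have h1 : (s:W)*((u:W)*t*u) = ((u:W)*t*u)*s := by rw [← hwv]; exact h
            have h2 := tauHR_braidA (hsq s) (hsq t) braid_st braid_tu h1
            rw [hc]
            exact h2.symm
          have hsz_non : ¬ (s : W) * z = z * s := by
            intro h
            apply htu
            apply Subtype.ext
            have h1 : (s:W)*(((s:W)*u*s)*t*((s:W)*u*s)) = (((s:W)*u*s)*t*((s:W)*u*s))*s := by
              rw [← hc, ← hzv]; exact h
            exact tauHR_braidB (hsq s) (hsq t) (hsq u) hb_su braid_tu h1
          have hvz : (z' : W) = (s : W) * z * s := by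
            rw [hz'v, hzv, hc, hpv]
            calc (u:W)*((s:W)*t*s)*u = ((s:W)*s)*u*s*t*s*u*((s:W)*s) := by rw [hsq s]; group
            _ = (s:W)*(((s:W)*u*s)*t*((s:W)*u*s))*s := by group
          have hvw : (w' : W) = (c : W) * p * c := by
            rw [hw'v, hwv, hc, hpv]
            calc (s:W)*((u:W)*t*u)*s = (s:W)*u*((s:W)*s)*t*((s:W)*s)*u*s := by rw [hsq s]; group
            _ = ((s:W)*u*s)*((s:W)*t*s)*((s:W)*u*s) := by group
          have hup_non : ¬ (u : W) * p = p * u := by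
            intro h
            apply hct
            apply tauHR_comm_of_conj_comm (hsq s)
            rw [scs_eq, ← hpv]
            exact h
          have hcp_non : ¬ (c : W) * p = p * c := by
            intro h
            apply hut
            apply tauHR_comm_of_conj_comm (hsq s)
            rw [← hc, ← hpv]
            exact h
          have Tut := hτ₁ u t hut w hwv
          have Tct := hτ₁ c t hct z hzv
          have Tsw := hτ₁ s w hsw_non w' hw'v
          have Tsz := hτ₁ s z hsz_non z' hvz
          have Tup := hτ₁ u p hup_non z' hz'v
          have Tcp := hτ₁ c p hcp_non w' hvw
          simp only [Tst, Tsp, Tut, Tct, Tsw, Tsz, Tup, Tcp, Tsu, Tsc, Tus, Tuc, Tcs, Tcu,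
            hτ₃ s, map_sub, map_smul]
          module
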